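/- Let A be a subsemigroup of (ℕ,+) (i.e., a set of nonnegative integers closed under addition) containing two elements n < m, and set p = m − n. Then A contains the arithmetic progression {n² + kp : k ≥ 0}, that is, n² + kp ∈ A for every integer k ≥ 0. -/

import Mathlib

lemma smul_mem' (A : Set ℕ) (hA : ∀ a ∈ A, ∀ b ∈ A, a + b ∈ A)
    (x : ℕ) (hx : x ∈ A) : ∀ c : ℕ, (c + 1) * x ∈ A := by
  intro c
  induction c with
  | zero => simpa using hx
  | succ c ih =>
    have := hA _ ih _ hx
    have h : (c + 1 + 1) * x = (c + 1) * x + x := by ring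
    rwa [h]

/-- If `A` is a subsemigroup of `(ℕ,+)` containing `n < m`, and `p = m - n`,
then `n² + k*p ∈ A` for every `k ≥ 0`. -/
theorem stmt0 (A : Set ℕ) (hA : ∀ a ∈ A, ∀ b ∈ A, a + b ∈ A)
    (n m : ℕ) (hn : n ∈ A) (hm : m ∈ A) (hlt : n < m) :
    ∀ k : ℕ, n ^ 2 + k * (m - n) ∈ A := by
  intro k
  set p := m - n with hp
  rcases Nat.eq_zero_or_pos n with h0 | hpos
  · subst h0
    simp only [pow_two, Nat.zero_mul, Nat.zero_add, Nat.sub_zero]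
    rcases Nat.eq_zero_or_pos k with hk0 | hk1
    · simpa [hk0] using hn
    · obtain ⟨c, rfl⟩ := Nat.exists_eq_add_of_lt hk1
      simpa [Nat.add_comm, hp] using smul_mem' A hA m hm c
  · -- n ≥ 1. Write k = q*n + r.
    set q := k / n with hq
    set r := k % n with hr
    have hrn : r < n := Nat.mod_lt _ hpos
    have hk : k = q * n + r := by rw [hq, hr, Nat.mul_comm]; exact (Nat.div_add_mod k n).symm
    -- target = (n - r + q*p) * n + r * m
    have key : n ^ 2 + k * p = (n - r + q * p) * n + r * m := by
      have hmn : m = n + p := by omega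
      rw [hk, hmn]
      have h1 : n - r + r = n := by omega
      nlinarith [h1, Nat.sub_add_cancel hrn.le]
    rw [key]
    have ha : n - r + q * p ≥ 1 := by omega
    obtain ⟨a, hae⟩ := Nat.exists_eq_add_of_lt ha
    have hmem1 : (n - r + q * p) * n ∈ A := by
      rw [hae]
      simpa using smul_mem' A hA n hn a
    rcases Nat.eq_zero_or_pos r with hr0 | hr1
    · simpa [hr0] using hmem1
    · obtain ⟨b, hbe⟩ := Nat.exists_eq_add_of_lt hr1
      have hmem2 : r * m ∈ A := by
        rw [hbe]
        simpa using smul_mem' A hA m hm b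
      exact hA _ hmem1 _ hmem2
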